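/- Let f be a smooth real function and let u : ℝ → ℝ be a smooth function with u'(x) ≠ 0 for all x. Set Q₁ = u''''/u'² − 4·u'''·u''/u'³ + 3·u''³/u'⁴ − 2·u''·f(u)/u'⁴ + f'(u)/u'² and R = u''' − (3/2)·u''²/u' + f(u)/u' (the right-hand side of the gKN equation). Then at every x, u'(x)·Q₁(x) = (d/dx)[ R(x)/u'(x) ]. (Consequently u_t = R = u_x·D_x⁻¹(u_x·Q₁), i.e., the gKN equation is Hamiltonian with Hamiltonian operator H = u_x D_x⁻¹ u_x and Hamiltonian density H₁ = (1/2)u_xx²/u_x² + (1/3)f(u)/u_x².) -/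

import Mathlib

open Real

/-- The gKN right-hand side `R = u''' - (3/2) u''²/u' + f(u)/u'` satisfies
`u' · Q₁ = (R/u')'`, i.e. the gKN equation is Hamiltonian with operator
`u_x D_x⁻¹ u_x` and density `H₁`. -/
theorem gKN_hamiltonian_structure (f : ℝ → ℝ) (hf : ContDiff ℝ (⊤ : ℕ∞) f)
    (u : ℝ → ℝ) (hu : ContDiff ℝ (⊤ : ℕ∞) u) (hux : ∀ x, deriv u x ≠ 0) :
    ∀ x,
      deriv u x *
        (deriv (deriv (deriv (deriv u))) x / (deriv u x)^2
          - 4 * deriv (deriv (deriv u)) x * deriv (deriv u) x / (deriv u x)^3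
          + 3 * (deriv (deriv u) x)^3 / (deriv u x)^4
          - 2 * deriv (deriv u) x * f (u x) / (deriv u x)^4
          + deriv f (u x) / (deriv u x)^2)
      = deriv (fun y =>
          (deriv (deriv (deriv u)) y - (3/2) * (deriv (deriv u) y)^2 / deriv u y
            + f (u y) / deriv u y) / deriv u y) x := by
  intro x
  have hu1 : ContDiff ℝ (⊤ : ℕ∞) (deriv u) := (contDiff_infty_iff_deriv.mp hu).2
  have hu2 : ContDiff ℝ (⊤ : ℕ∞) (deriv (deriv u)) :=
    (contDiff_infty_iff_deriv.mp hu1).2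
  have hu3 : ContDiff ℝ (⊤ : ℕ∞) (deriv (deriv (deriv u))) :=
    (contDiff_infty_iff_deriv.mp hu2).2
  have h1 : HasDerivAt u (deriv u x) x := (hu.differentiable (by simp) x).hasDerivAt
  have h2 : HasDerivAt (deriv u) (deriv (deriv u) x) x :=
    (hu1.differentiable (by simp) x).hasDerivAt
  have h3 : HasDerivAt (deriv (deriv u)) (deriv (deriv (deriv u)) x) x :=
    (hu2.differentiable (by simp) x).hasDerivAt
  have h4 : HasDerivAt (deriv (deriv (deriv u))) (deriv (deriv (deriv (deriv u))) x) x :=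
    (hu3.differentiable (by simp) x).hasDerivAt
  have hfu : HasDerivAt (fun y => f (u y)) (deriv f (u x) * deriv u x) x :=
    ((hf.differentiable (by simp) (u x)).hasDerivAt).comp x h1
  have hsq : HasDerivAt (fun y => (deriv (deriv u) y) ^ 2)
      ((2 : ℕ) * (deriv (deriv u) x) ^ 1 * deriv (deriv (deriv u)) x) x := h3.pow 2
  have hterm2 := (hsq.const_mul ((3 : ℝ)/2)).div h2 (hux x)
  have hterm3 := hfu.div h2 (hux x)
  have hN := (h4.sub hterm2).add hterm3
  have hg := hN.div h2 (hux x)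
  rw [show deriv (fun y =>
          (deriv (deriv (deriv u)) y - (3/2) * (deriv (deriv u) y)^2 / deriv u y
            + f (u y) / deriv u y) / deriv u y) x = _ from hg.deriv]
  simp only [Pi.add_apply, Pi.sub_apply, Pi.div_apply]
  have hx := hux x
  field_simp
  ring
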